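/- Let n, k, t be positive integers with t ≤ k ≤ n and n < (1/2)·k·(k/t + 1) (as rational numbers). Then there exists a positive integer m with n < mk − (1/2)m(m−1)t, and, letting m′ be the least such positive integer, ϖ(n,k,t) = m′ − 1. -/

import Mathlib

open Finset

/-- `H` is a family of subsets of `[n] = {1, …, n}`. -/
def OnGround (n : ℕ) (H : Finset (Finset ℕ)) : Prop :=
  ∀ A ∈ H, A ⊆ Finset.Icc 1 n

/-- `H` is `k`-uniform: every member has cardinality `k`. -/
def Uniform (k : ℕ) (H : Finset (Finset ℕ)) : Prop :=
  ∀ A ∈ H, A.card = k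

/-- `H` is at most `t`-intersecting: distinct members meet in at most `t` elements. -/
def AtMostIntersecting (t : ℕ) (H : Finset (Finset ℕ)) : Prop :=
  ∀ A ∈ H, ∀ B ∈ H, A ≠ B → (A ∩ B).card ≤ t

/-- `H` is maximally cover-free: no member is contained in the union of the others. -/
def MaxCoverFree (H : Finset (Finset ℕ)) : Prop :=
  ∀ A ∈ H, ¬ A ⊆ (H.erase A).biUnion id

/-- `ϖ(n,k,t)`: the maximum size of an at most `t`-intersecting, `k`-uniform
family of subsets of `[n]`. -/
noncomputable def varpi (n k t : ℕ) : ℕ :=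
  sSup {m | ∃ H : Finset (Finset ℕ),
    OnGround n H ∧ Uniform k H ∧ AtMostIntersecting t H ∧ H.card = m}

/-- triangular number -/
def Tri (j : ℕ) : ℕ := j * (j-1) / 2

lemma two_tri (j : ℕ) : 2 * Tri j = j * (j - 1) := by
  have h : Even (j * (j-1)) := by
    rcases Nat.even_or_odd j with h | h
    · exact h.mul_right _
    · cases j with
      | zero => simp
      | succ j => simpa using (Nat.Odd.sub_odd h odd_one).mul_left (j+1)
  obtain ⟨c, hc⟩ := h
  unfold Tri
  omega

lemma tri_succ (j : ℕ) : Tri (j+1) = Tri j + j := by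
  have h1 := two_tri j
  have h2 := two_tri (j+1)
  simp only [Nat.add_sub_cancel] at h2
  have h3 : (j+1) * j = j * (j-1) + 2*j := by
    cases j with
    | zero => simp
    | succ a => simp only [Nat.add_sub_cancel]; ring
  omega

lemma tri_mono {j j' : ℕ} (h : j ≤ j') : Tri j ≤ Tri j' := by
  induction j' with
  | zero => have : j = 0 := by omega
            subst this; exact le_rfl
  | succ a ih =>
    rcases Nat.lt_or_ge j (a+1) with h2 | h2
    · have := ih (by omega); have := tri_succ a; omega
    · have : j = a + 1 := by omega
      subst this; exact le_rfl

lemma tri_lt {a b m : ℕ} (hab : a < b) (hbm : b < m) : Tri b + a < Tri m := by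
  have h1 : Tri b + a < Tri (b+1) := by have := tri_succ b; omega
  have h2 : Tri (b+1) ≤ Tri m := tri_mono (by omega)
  omega

lemma tri_inj {a b a' b' : ℕ} (h1 : a < b) (h2 : a' < b')
    (h : Tri b + a = Tri b' + a') : a = a' ∧ b = b' := by
  rcases Nat.lt_trichotomy b b' with hb | hb | hb
  · have := tri_lt h1 hb; omega
  · subst hb; omega
  · have := tri_lt h2 hb; omega

/-- index of the unordered pair {i,j} -/
def blkIdx (i j : ℕ) : ℕ := Tri (max i j) + min i j

lemma blkIdx_lt {i j m : ℕ} (hij : i ≠ j) (hi : i < m) (hj : j < m) :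
    blkIdx i j < Tri m := by
  unfold blkIdx
  rcases Nat.lt_or_ge i j with h | h
  · exact tri_lt (by omega : min i j < max i j) (by omega)
  · exact tri_lt (by omega : min i j < max i j) (by omega)

lemma blkIdx_inj {i j i' j' : ℕ} (hij : i ≠ j) (hij' : i' ≠ j')
    (h : blkIdx i j = blkIdx i' j') : (i = i' ∧ j = j') ∨ (i = j' ∧ j = i') := by
  unfold blkIdx at h
  have := tri_inj (show min i j < max i j by omega) (show min i' j' < max i' j' by omega) (by omega)
  omega

def privA (p i : ℕ) : Finset ℕ := (Finset.range p).image (fun s => i * p + s + 1)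

def blkF (m t p e : ℕ) : Finset ℕ := (Finset.range t).image (fun s => m * p + e * t + s + 1)

def myA (m t p i : ℕ) : Finset ℕ :=
  privA p i ∪ ((Finset.range m).erase i).biUnion (fun j => blkF m t p (blkIdx i j))

lemma mem_privA {p i x : ℕ} : x ∈ privA p i ↔ ∃ s, s < p ∧ x = i * p + s + 1 := by
  simp [privA, eq_comm]

lemma mem_blkF {m t p e x : ℕ} : x ∈ blkF m t p e ↔ ∃ s, s < t ∧ x = m * p + e * t + s + 1 := by
  simp [blkF, eq_comm]

lemma card_privA (p i : ℕ) : (privA p i).card = p := by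
  rw [privA, Finset.card_image_of_injective _ (fun a b h => by omega), Finset.card_range]

lemma card_blkF (m t p e : ℕ) : (blkF m t p e).card = t := by
  rw [blkF, Finset.card_image_of_injective _ (fun a b h => by omega), Finset.card_range]

lemma mul_decomp {p i j s : ℕ} (hp : 0 < p) (hs : s < p) (h : i * p = j * p + s) :
    i = j ∧ s = 0 := by
  rcases le_or_gt i j with hle | hlt
  · have : i * p ≤ j * p := Nat.mul_le_mul_right p hle
    have hs0 : s = 0 := by omega
    subst hs0
    have : i = j := Nat.eq_of_mul_eq_mul_right hp (by omega)
    exact ⟨this, rfl⟩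
  · have : (j+1) * p ≤ i * p := Nat.mul_le_mul_right p (by omega)
    have : j * p + p ≤ i * p := by nlinarith
    omega

lemma blkF_disj {m t p e e' x : ℕ} (ht : 0 < t) (he : e ≠ e')
    (hx : x ∈ blkF m t p e) (hx' : x ∈ blkF m t p e') : False := by
  obtain ⟨s, hs, rfl⟩ := mem_blkF.mp hx
  obtain ⟨s', hs', h⟩ := mem_blkF.mp hx'
  have : e * t = e' * t + (s' - s) ∨ e' * t = e * t + (s - s') := by omega
  rcases this with h2 | h2
  · exact he (mul_decomp ht (by omega) h2).1
  · exact he.symm (mul_decomp ht (by omega) h2).1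

lemma privA_blkF_disj {m t p i e x : ℕ} (hi : i < m)
    (hx : x ∈ privA p i) (hx' : x ∈ blkF m t p e) : False := by
  obtain ⟨s, hs, rfl⟩ := mem_privA.mp hx
  obtain ⟨s', hs', h⟩ := mem_blkF.mp hx'
  have : (i+1) * p ≤ m * p := Nat.mul_le_mul_right p (by omega)
  nlinarith

lemma privA_disj {p i i' x : ℕ} (hp : 0 < p) (hii' : i ≠ i')
    (hx : x ∈ privA p i) (hx' : x ∈ privA p i') : False := by
  obtain ⟨s, hs, rfl⟩ := mem_privA.mp hx
  obtain ⟨s', hs', h⟩ := mem_privA.mp hx'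
  have : i * p = i' * p + (s' - s) ∨ i' * p = i * p + (s - s') := by omega
  rcases this with h2 | h2
  · exact hii' (mul_decomp hp (by omega) h2).1
  · exact hii'.symm (mul_decomp hp (by omega) h2).1

lemma card_myA {m t p i : ℕ} (ht : 0 < t) (hi : i < m) :
    (myA m t p i).card = p + (m-1) * t := by
  unfold myA
  rw [Finset.card_union_of_disjoint, card_privA, Finset.card_biUnion]
  · simp only [card_blkF, Finset.sum_const, smul_eq_mul]
    rw [Finset.card_erase_of_mem (Finset.mem_range.mpr hi), Finset.card_range]
  · intro a ha b hb hab
    simp only [Finset.mem_coe, Finset.mem_erase, Finset.mem_range] at ha hb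
    apply Finset.disjoint_left.mpr
    intro x hx hx'
    refine blkF_disj ht (fun h => ?_) hx hx'
    rcases blkIdx_inj ha.1.symm hb.1.symm h with ⟨h1, h2⟩ | ⟨h1, h2⟩ <;> omega
  · apply Finset.disjoint_left.mpr
    intro x hx hx'
    simp only [Finset.mem_biUnion] at hx'
    obtain ⟨j, _, hx'⟩ := hx'
    exact privA_blkF_disj hi hx hx'

lemma myA_subset {m t p i : ℕ} (hi : i < m) :
    myA m t p i ⊆ Finset.Icc 1 (m * p + Tri m * t) := by
  intro x hx
  rw [Finset.mem_Icc]
  rcases Finset.mem_union.mp hx with hx | hx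
  · obtain ⟨s, hs, rfl⟩ := mem_privA.mp hx
    have : (i+1) * p ≤ m * p := Nat.mul_le_mul_right p (by omega)
    constructor
    · omega
    · nlinarith
  · simp only [Finset.mem_biUnion, Finset.mem_erase, Finset.mem_range] at hx
    obtain ⟨j, ⟨hji, hj⟩, hx⟩ := hx
    obtain ⟨s, hs, rfl⟩ := mem_blkF.mp hx
    have he : blkIdx i j < Tri m := blkIdx_lt (Ne.symm hji) hi hj
    have : (blkIdx i j + 1) * t ≤ Tri m * t := Nat.mul_le_mul_right t (by omega)
    constructor
    · omega
    · nlinarith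

lemma myA_inter {m t p i j : ℕ} (hp : 0 < p) (ht : 0 < t) (hi : i < m) (hj : j < m)
    (hij : i ≠ j) : (myA m t p i ∩ myA m t p j).card ≤ t := by
  have hsub : myA m t p i ∩ myA m t p j ⊆ blkF m t p (blkIdx i j) := by
    intro x hx
    rw [Finset.mem_inter] at hx
    obtain ⟨hxi, hxj⟩ := hx
    rcases Finset.mem_union.mp hxi with h1 | h1 <;>
      rcases Finset.mem_union.mp hxj with h2 | h2
    · exact (privA_disj hp hij h1 h2).elim
    · simp only [Finset.mem_biUnion] at h2
      obtain ⟨l, _, h2⟩ := h2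
      exact (privA_blkF_disj hi h1 h2).elim
    · simp only [Finset.mem_biUnion] at h1
      obtain ⟨l, _, h1⟩ := h1
      exact (privA_blkF_disj hj h2 h1).elim
    · simp only [Finset.mem_biUnion, Finset.mem_erase, Finset.mem_range] at h1 h2
      obtain ⟨l, ⟨hli, _⟩, h1⟩ := h1
      obtain ⟨l', ⟨hl'j, _⟩, h2⟩ := h2
      by_cases he : blkIdx i l = blkIdx j l'
      · rcases blkIdx_inj (Ne.symm hli) (Ne.symm hl'j) he with ⟨e1, e2⟩ | ⟨e1, e2⟩
        · exact absurd e1 hij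
        · subst e2; exact h1
      · exact (blkF_disj ht he h1 h2).elim
  calc (myA m t p i ∩ myA m t p j).card ≤ (blkF m t p (blkIdx i j)).card :=
        Finset.card_le_card hsub
    _ = t := card_blkF m t p _

lemma myA_ne {m t p i j : ℕ} (hp : 0 < p) (hi : i < m) (hij : i ≠ j) :
    myA m t p i ≠ myA m t p j := by
  intro h
  have hx : i * p + 0 + 1 ∈ myA m t p i :=
    Finset.mem_union_left _ (mem_privA.mpr ⟨0, hp, rfl⟩)
  rw [h] at hx
  rcases Finset.mem_union.mp hx with h1 | h1
  · obtain ⟨s, hs, h1⟩ := mem_privA.mp h1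
    have : i * p = j * p + s ∨ j * p + s = i * p := by omega
    rcases this with h2 | h2
    · exact hij (mul_decomp hp hs h2).1
    · exact hij ((mul_decomp hp hs h2.symm).1)
  · simp only [Finset.mem_biUnion] at h1
    obtain ⟨l, _, h1⟩ := h1
    obtain ⟨s, hs, h1⟩ := mem_blkF.mp h1
    have : (i+1) * p ≤ m * p := Nat.mul_le_mul_right p (by omega)
    nlinarith

lemma construction (n m k t p : ℕ) (hp : 0 < p) (ht : 0 < t)
    (hk : k = p + (m-1) * t) (hn : m * p + Tri m * t ≤ n) :
    ∃ H : Finset (Finset ℕ), OnGround n H ∧ Uniform k H ∧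
      AtMostIntersecting t H ∧ H.card = m := by
  refine ⟨(Finset.range m).image (myA m t p), ?_, ?_, ?_, ?_⟩
  · intro A hA
    simp only [Finset.mem_image, Finset.mem_range] at hA
    obtain ⟨i, hi, rfl⟩ := hA
    exact (myA_subset hi).trans (Finset.Icc_subset_Icc_right hn)
  · intro A hA
    simp only [Finset.mem_image, Finset.mem_range] at hA
    obtain ⟨i, hi, rfl⟩ := hA
    rw [card_myA ht hi, hk]
  · intro A hA B hB hAB
    simp only [Finset.mem_image, Finset.mem_range] at hA hB
    obtain ⟨i, hi, rfl⟩ := hA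
    obtain ⟨j, hj, rfl⟩ := hB
    exact myA_inter hp ht hi hj (fun h => hAB (by rw [h]))
  · rw [Finset.card_image_of_injOn, Finset.card_range]
    intro i hi j hj h
    by_contra hij
    exact myA_ne hp (Finset.mem_range.mp hi) hij h

lemma union_lb (k t : ℕ) (s : Finset (Finset ℕ))
    (hu : ∀ A ∈ s, A.card = k)
    (hi : ∀ A ∈ s, ∀ B ∈ s, A ≠ B → (A ∩ B).card ≤ t) :
    (s.card * k : ℤ) - t * (s.card.choose 2) ≤ ((s.biUnion id).card : ℤ) := by
  induction s using Finset.induction_on with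
  | empty => simp
  | @insert A s hA ih =>
    have hu' : ∀ B ∈ s, B.card = k := fun B hB => hu B (Finset.mem_insert_of_mem hB)
    have hi' : ∀ B ∈ s, ∀ C ∈ s, B ≠ C → (B ∩ C).card ≤ t := fun B hB C hC h =>
      hi B (Finset.mem_insert_of_mem hB) C (Finset.mem_insert_of_mem hC) h
    have ihh := ih hu' hi'
    have hcard : (insert A s).card = s.card + 1 := Finset.card_insert_of_notMem hA
    have hchoose : (s.card + 1).choose 2 = s.card.choose 2 + s.card := by
      rw [Nat.choose_succ_succ, Nat.choose_one_right, Nat.add_comm]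
    have hbu : (insert A s).biUnion id = A ∪ s.biUnion id := Finset.biUnion_insert
    have hcap : (A ∩ s.biUnion id).card ≤ s.card * t := by
      have h1 : A ∩ s.biUnion id ⊆ s.biUnion (fun B => A ∩ B) := by
        intro x hx
        simp only [Finset.mem_inter, Finset.mem_biUnion, id] at hx ⊢
        obtain ⟨hxA, B, hB, hxB⟩ := hx
        exact ⟨B, hB, hxA, hxB⟩
      calc (A ∩ s.biUnion id).card ≤ (s.biUnion (fun B => A ∩ B)).card :=
            Finset.card_le_card h1
        _ ≤ ∑ B ∈ s, (A ∩ B).card := Finset.card_biUnion_le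
        _ ≤ ∑ _B ∈ s, t := Finset.sum_le_sum (fun B hB =>
            hi A (Finset.mem_insert_self A s) B (Finset.mem_insert_of_mem hB)
              (fun h => hA (h ▸ hB)))
        _ = s.card * t := by rw [Finset.sum_const, smul_eq_mul]
    have hun : (A ∪ s.biUnion id).card + (A ∩ s.biUnion id).card
        = A.card + (s.biUnion id).card := Finset.card_union_add_card_inter _ _
    have hAk : A.card = k := hu A (Finset.mem_insert_self A s)
    rw [hbu, hcard, hchoose]
    push_cast
    push_cast at ihh
    nlinarith [hcap, hun, hAk]


/-- Let `t ≤ k ≤ n` be positive integers with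
`n < (1/2)·k·(k/t + 1)` (over ℚ). Then there is a positive integer `m` with
`n < mk − (1/2)m(m−1)t`, and for the least such `m′`, `ϖ(n,k,t) = m′ − 1`. -/
theorem stmt4 (n k t : ℕ) (hn : 0 < n) (hk : 0 < k) (ht : 0 < t)
    (htk : t ≤ k) (hkn : k ≤ n)
    (hsmall : (n : ℚ) < (1 / 2) * k * ((k : ℚ) / t + 1)) :
    (∃ m : ℕ, 0 < m ∧ (n : ℚ) < m * k - (1 / 2) * m * (m - 1) * t) ∧
    ∀ m' : ℕ,
      (0 < m' ∧ (n : ℚ) < m' * k - (1 / 2) * m' * (m' - 1) * t ∧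
        ∀ m : ℕ, 0 < m → (n : ℚ) < m * k - (1 / 2) * m * (m - 1) * t → m' ≤ m) →
      varpi n k t = m' - 1 := by
  set q := k / t with hq
  set r := k % t with hr
  have htQ : (0:ℚ) < t := by exact_mod_cast ht
  have hkQ : (k:ℚ) = t * q + r := by
    have h := Nat.div_add_mod k t
    exact_mod_cast h.symm
  have hrt : r < t := Nat.mod_lt k ht
  have hrtQ : (r:ℚ) < t := by exact_mod_cast hrt
  have hr0 : (0:ℚ) ≤ r := by positivity
  have h2 : (n:ℚ) * (2*t) < k * (k + t) := by
    have e1 : (1/2:ℚ) * k * ((k:ℚ)/t + 1) * (2*t) = k * (k + t) := by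
      field_simp
      try ring
    rw [← e1]
    exact mul_lt_mul_of_pos_right hsmall (by positivity)
  have hqkey : ∀ mm : ℕ, mm = q + 1 →
      (n:ℚ) < mm * k - (1/2) * mm * ((mm:ℚ) - 1) * t := by
    intro mm hmm
    subst hmm
    have hmmc : ((q + 1 : ℕ) : ℚ) = (q:ℚ) + 1 := by push_cast; ring
    rw [hmmc]
    have key : (k:ℚ) * (k + t) ≤ (((q:ℚ)+1) * k - (1/2) * ((q:ℚ)+1) * (((q:ℚ)+1) - 1) * t) * (2*t) := by
      nlinarith [mul_nonneg hr0 (by linarith : (0:ℚ) ≤ (t:ℚ) - r), hkQ]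
    have := lt_of_lt_of_le h2 key
    exact lt_of_mul_lt_mul_right this (by positivity)
  have hexists : ∃ m : ℕ, 0 < m ∧ (n : ℚ) < m * k - (1 / 2) * m * ((m:ℚ) - 1) * t :=
    ⟨q + 1, Nat.succ_pos q, hqkey (q+1) rfl⟩
  refine ⟨hexists, ?_⟩
  rintro m' ⟨hm'pos, hm'lt, hm'min⟩
  -- m' ≥ 2
  have hm'2 : 2 ≤ m' := by
    rcases Nat.lt_or_ge m' 2 with h | h
    · have h1 : m' = 1 := by omega
      rw [h1] at hm'lt
      norm_num at hm'lt
      have hkn' : (k:ℚ) ≤ n := by exact_mod_cast hkn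
      linarith
    · exact h
  have hm'le : m' ≤ q + 1 := hm'min (q+1) (Nat.succ_pos q) (hqkey (q+1) rfl)
  set m := m' - 1 with hm
  have hm1 : 1 ≤ m := by omega
  have hmq : m ≤ q := by omega
  have hmt : m * t ≤ k := le_trans (Nat.mul_le_mul_right t hmq)
    (by rw [hq]; exact Nat.div_mul_le_self k t)
  have hmtt : (m - 1) * t + t ≤ k := by
    have : (m - 1) * t + t = m * t := by
      have : m - 1 + 1 = m := by omega
      calc (m-1)*t + t = ((m-1)+1)*t := by ring
        _ = m * t := by rw [this]
    omega
  set p := k - (m-1) * t with hp_def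
  have hp : 0 < p := by omega
  have hk_eq : k = p + (m-1) * t := by omega
  -- f(m) ≤ n over ℚ
  have hfm : (m:ℚ) * k - (1/2) * m * ((m:ℚ) - 1) * t ≤ n := by
    by_contra h
    push_neg at h
    have := hm'min m (by omega) h
    omega
  -- N ≤ n
  have hmcast : ((m - 1 : ℕ) : ℚ) = (m:ℚ) - 1 := by
    push_cast [Nat.cast_sub hm1]
    ring
  have hpcast : (p:ℚ) = (k:ℚ) - ((m:ℚ) - 1) * t := by
    rw [hp_def, Nat.cast_sub (by omega : (m-1)*t ≤ k)]
    push_cast [hmcast]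
    ring
  have htri : (Tri m : ℚ) = (m:ℚ) * ((m:ℚ) - 1) / 2 := by
    have h1 := two_tri m
    have h2 : 2 * (Tri m : ℚ) = (m:ℚ) * ((m:ℚ) - 1) := by
      rw [← hmcast]
      exact_mod_cast congrArg (Nat.cast : ℕ → ℚ) h1
    linarith
  have hN : ((m * p + Tri m * t : ℕ) : ℚ) = (m:ℚ) * k - (1/2) * m * ((m:ℚ) - 1) * t := by
    push_cast
    rw [hpcast, htri]
    ring
  have hNn : m * p + Tri m * t ≤ n := by
    have : ((m * p + Tri m * t : ℕ) : ℚ) ≤ (n:ℚ) := by rw [hN]; exact hfm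
    exact_mod_cast this
  obtain ⟨H, hg, hu, hi, hcard⟩ := construction n m k t p hp ht hk_eq hNn
  -- upper bound
  have hub : ∀ c ∈ {c | ∃ H : Finset (Finset ℕ),
      OnGround n H ∧ Uniform k H ∧ AtMostIntersecting t H ∧ H.card = c}, c ≤ m := by
    rintro c ⟨H', hg', hu', hi', hc'⟩
    by_contra hcm
    push_neg at hcm
    have hm'c : m' ≤ H'.card := by omega
    obtain ⟨H'', hsub, hcardH''⟩ := Finset.exists_subset_card_eq hm'c
    have hub2 := union_lb k t H'' (fun A hA => hu' A (hsub hA))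
      (fun A hA B hB hAB => hi' A (hsub hA) B (hsub hB) hAB)
    rw [hcardH''] at hub2
    have hsubn : H''.biUnion id ⊆ Finset.Icc 1 n := by
      intro x hx
      simp only [Finset.mem_biUnion, id] at hx
      obtain ⟨A, hA, hxA⟩ := hx
      exact hg' A (hsub hA) hxA
    have hbn : ((H''.biUnion id).card : ℤ) ≤ n := by
      have := Finset.card_le_card hsubn
      rw [Nat.card_Icc] at this
      exact_mod_cast (by omega : (H''.biUnion id).card ≤ n)
    have hZ : (m' * k : ℤ) - t * (m'.choose 2) ≤ n := le_trans hub2 hbn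
    have hQ : (m' : ℚ) * k - t * ((m'.choose 2 : ℕ) : ℚ) ≤ n := by exact_mod_cast hZ
    rw [Nat.cast_choose_two] at hQ
    nlinarith [hm'lt, hQ]
  have hmem : m ∈ {c | ∃ H : Finset (Finset ℕ),
      OnGround n H ∧ Uniform k H ∧ AtMostIntersecting t H ∧ H.card = c} :=
    ⟨H, hg, hu, hi, hcard⟩
  show varpi n k t = m
  rw [varpi]
  exact IsGreatest.csSup_eq ⟨hmem, hub⟩
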